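/- Descent Lemma for basic evaluation: with evaluation step e on pairs (code, argument) defined by the case distinction (basic maps finish to identity, composition e(v∘u, a) = (v ∘ e_map(u,a), e_arg(u,a)) when u ≠ id and (v, a) when u = id, cylindrification acts on the right component, iteration expands e(u^§, ⟨a;n⟩) = (u^[n], a)), and complexity c(u,a) := c(u) ∈ ℕ[ω] as defined, one has: c(u) > 0 → c(e_map(u,a)) < c(u), and c(u) = 0 → e(u,a) = (u,a). -/

import Mathlib

open Polynomial

/-- The degree-first, top-down lexicographic strict order on `ℕ[ω]`. -/
def PolyLt (p q : Polynomial ℕ) : Prop :=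
  ∃ d, p.coeff d < q.coeff d ∧ ∀ e, d < e → p.coeff e = q.coeff e

/-- The universal argument object `X_⊥`: an undefined element `⊥`, singletons
of natural numbers, and nested pairs. -/
inductive Xb : Type
  | bot : Xb
  | sing : ℕ → Xb
  | pair : Xb → Xb → Xb

/-- Codes of PR maps; a basic map constant carries its objective meaning as a
function on the universal object. -/
inductive PRCode : Type
  | idc : PRCode
  | bas : (Xb → Xb) → PRCode
  | comp : PRCode → PRCode → PRCode
  | cyl : PRCode → PRCode
  | iter : PRCode → PRCode

/-- Syntactic complexity of PR map codes, with values in `ℕ[ω]`. -/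
noncomputable def cC : PRCode → Polynomial ℕ
  | .idc => 0
  | .bas _ => 1
  | .comp v u => cC u + cC v + 1
  | .cyl v => cC v + 1
  | .iter u => X * (cC u + 1)

/-- The `n`-fold code expansion `u^[0] = ⌜id⌝`, `u^[n+1] = u^[n] ∘ u`. -/
def expand (u : PRCode) : ℕ → PRCode
  | 0 => .idc
  | n + 1 => .comp (expand u n) u

/-- The basic evaluation step `e` on map-code/argument pairs. -/
def estep : PRCode → Xb → PRCode × Xb
  | .idc, a => (.idc, a)
  | .bas f, a => (.idc, f a)
  | .comp v .idc, a => (v, a)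
  | .comp v u, a => (.comp v (estep u a).1, (estep u a).2)
  | .cyl .idc, a => (.idc, a)
  | .cyl v, .pair a b => (.cyl (estep v b).1, .pair a (estep v b).2)
  | .cyl _, _ => (.idc, .bot)
  | .iter u, .pair a (.sing n) => (expand u n, a)
  | .iter _, _ => (.idc, .bot)

/-- The evaluation step as an endomap of `Codes × X_⊥`. -/
def E : PRCode × Xb → PRCode × Xb := fun p => estep p.1 p.2

lemma add_one_ne_zero' (p : Polynomial ℕ) : p + 1 ≠ 0 := by
  intro h
  have := congrArg (fun q => Polynomial.coeff q 0) h
  simp at this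

lemma polyLt_of_degree_lt {p q : Polynomial ℕ} (h : p.degree < q.degree) : PolyLt p q := by
  have hq : q ≠ 0 := by
    intro hq; rw [hq, degree_zero] at h; exact absurd h (by simp)
  refine ⟨q.natDegree, ?_, fun e he => ?_⟩
  · have hp : p.coeff q.natDegree = 0 :=
      coeff_eq_zero_of_degree_lt (lt_of_lt_of_le h (degree_le_natDegree))
    rw [hp]
    exact Nat.pos_of_ne_zero (fun h => hq (leadingCoeff_eq_zero.1 h))
  · have h1 : p.coeff e = 0 :=
      coeff_eq_zero_of_degree_lt (lt_of_lt_of_le h (le_trans degree_le_natDegree (by exact_mod_cast he.le)))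
    have h2 : q.coeff e = 0 := coeff_eq_zero_of_natDegree_lt he
    rw [h1, h2]

lemma polyLt_zero {q : Polynomial ℕ} (hq : q ≠ 0) : PolyLt 0 q := by
  apply polyLt_of_degree_lt
  rw [degree_zero]
  exact bot_lt_iff_ne_bot.2 (degree_ne_bot.2 hq)

lemma polyLt_add_right {p q : Polynomial ℕ} (r : Polynomial ℕ) (h : PolyLt p q) :
    PolyLt (p + r) (q + r) := by
  obtain ⟨d, hd, he⟩ := h
  exact ⟨d, by simp only [coeff_add]; exact Nat.add_lt_add_right hd _, fun e h' => by simp [he e h']⟩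

lemma polyLt_add_one (p : Polynomial ℕ) : PolyLt p (p + 1) := by
  refine ⟨0, by simp, fun e he => ?_⟩
  simp [coeff_add, coeff_one, (Nat.pos_iff_ne_zero.1 he)]

lemma cC_ne_zero {u : PRCode} (h : u ≠ .idc) : cC u ≠ 0 := by
  cases u with
  | idc => exact absurd rfl h
  | bas f => simp [cC]
  | comp v w => exact add_one_ne_zero' _
  | cyl v => exact add_one_ne_zero' _
  | iter v => exact mul_ne_zero X_ne_zero (add_one_ne_zero' _)

lemma degree_expand (u : PRCode) (n : ℕ) :
    (cC (_root_.expand u n)).degree ≤ (cC u + 1).degree := by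
  induction n with
  | zero => simp [_root_.expand, cC]
  | succ n ih =>
    show (cC (.comp (_root_.expand u n) u)).degree ≤ _
    have : cC (.comp (_root_.expand u n) u) = (cC u + 1) + cC (_root_.expand u n) := by
      simp [cC]; ring
    rw [this]
    exact le_trans (degree_add_le _ _) (max_le le_rfl ih)

lemma polyLt_expand (u : PRCode) (n : ℕ) :
    PolyLt (cC (_root_.expand u n)) (X * (cC u + 1)) := by
  apply polyLt_of_degree_lt
  have hne : cC u + 1 ≠ 0 := add_one_ne_zero' _
  have hdeg : (X * (cC u + 1)).degree = 1 + (cC u + 1).degree := by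
    rw [degree_mul, degree_X]
  refine lt_of_le_of_lt (degree_expand u n) ?_
  rw [hdeg, degree_eq_natDegree hne]
  exact_mod_cast Nat.lt_one_add_iff.2 le_rfl

lemma estep_comp_fst {v : PRCode} (w : PRCode) (a : Xb) (h : v ≠ .idc) :
    (estep (.comp w v) a).1 = .comp w (estep v a).1 := by
  cases v <;> simp_all [estep]

lemma estep_cyl_fst_pair {v : PRCode} (a b : Xb) (h : v ≠ .idc) :
    (estep (.cyl v) (.pair a b)).1 = .cyl (estep v b).1 := by
  cases v <;> simp_all [estep]

theorem descent_lemma (u : PRCode) (a : Xb) :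
    (PolyLt 0 (cC u) → PolyLt (cC (estep u a).1) (cC u)) ∧
      (cC u = 0 → estep u a = (u, a)) := by
  induction u generalizing a with
  | idc => exact ⟨fun h => by simpa [cC, estep] using h, fun _ => by simp [estep]⟩
  | bas f =>
    refine ⟨fun _ => ?_, fun h => absurd h (by simp [cC])⟩
    simpa [estep, cC] using polyLt_zero (q := 1) one_ne_zero
  | comp v w ihv ihw =>
    refine ⟨fun _ => ?_, fun h => absurd h (add_one_ne_zero' _)⟩
    by_cases hw : w = .idc
    · subst hw
      show PolyLt (cC v) (cC .idc + cC v + 1)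
      simpa [cC] using polyLt_add_one (cC v)
    · rw [estep_comp_fst v a hw]
      simp only [cC]
      exact polyLt_add_right _ (polyLt_add_right _
        ((ihw a).1 (polyLt_zero (cC_ne_zero hw))))
  | cyl v ihv =>
    refine ⟨fun _ => ?_, fun h => absurd h (add_one_ne_zero' _)⟩
    by_cases hv : v = .idc
    · subst hv
      have : (estep (.cyl .idc) a).1 = .idc := by simp [estep]
      rw [this]
      exact polyLt_zero (add_one_ne_zero' _)
    · cases a with
      | pair a b =>
        rw [estep_cyl_fst_pair a b hv]
        simp only [cC]
        exact polyLt_add_right _ ((ihv b).1 (polyLt_zero (cC_ne_zero hv)))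
      | bot =>
        have : (estep (.cyl v) .bot).1 = .idc := by cases v <;> simp_all [estep]
        rw [this]; exact polyLt_zero (add_one_ne_zero' _)
      | sing n =>
        have : (estep (.cyl v) (.sing n)).1 = .idc := by cases v <;> simp_all [estep]
        rw [this]; exact polyLt_zero (add_one_ne_zero' _)
  | iter v ihv =>
    refine ⟨fun _ => ?_, fun h => absurd h (mul_ne_zero X_ne_zero (add_one_ne_zero' _))⟩
    cases a with
    | pair a b =>
      cases b with
      | sing n => exact polyLt_expand v n
      | bot => exact polyLt_zero (mul_ne_zero X_ne_zero (add_one_ne_zero' _))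
      | pair x y => exact polyLt_zero (mul_ne_zero X_ne_zero (add_one_ne_zero' _))
    | bot => exact polyLt_zero (mul_ne_zero X_ne_zero (add_one_ne_zero' _))
    | sing n => exact polyLt_zero (mul_ne_zero X_ne_zero (add_one_ne_zero' _))
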